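/- On the Bakhvalov-type mesh, away from the transition point the ratios of consecutive fine-region mesh widths are bounded below and above: there exists a constant C > 0, independent of ε and N, such that for every even integer N ≥ 4, every ε with 0 < Nε ≤ 1, and every index i with N/2+2 ≤ i ≤ N−1, one has C·h_i ≤ h_{i+1} ≤ h_i. -/

import Mathlib

/-- On the Bakhvalov-type mesh (generated by
`φ(t) = −ln(1 − 2(1 − ε)t)`), away from the transition point the ratios of
consecutive fine-region mesh widths are bounded below and above: there is a
constant `C > 0`, independent of `ε` and `N`, such that for every even `N ≥ 4`,
every `ε` with `0 < Nε ≤ 1`, and every `i` with `N/2+2 ≤ i ≤ N−1` one has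
`C·h_i ≤ h_{i+1} ≤ h_i`. -/
theorem bakhvalov_type_mesh_ratio
    (α σ : ℝ) (hα : 0 < α) (hσ : 0 < σ) :
    ∃ C : ℝ, 0 < C ∧
      ∀ N : ℕ, Even N → 4 ≤ N →
        ∀ ε : ℝ, 0 < ε → (N:ℝ) * ε ≤ 1 →
          ∀ i : ℕ, N / 2 + 2 ≤ i → i ≤ N - 1 →
            C * ((σ * ε / α) *
                  ((-Real.log (1 - 2 * (1 - ε) * (1 - ((i:ℝ) - 1) / N)))
                    - (-Real.log (1 - 2 * (1 - ε) * (1 - (i:ℝ) / N)))))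
                ≤ (σ * ε / α) *
                  ((-Real.log (1 - 2 * (1 - ε) * (1 - (i:ℝ) / N)))
                    - (-Real.log (1 - 2 * (1 - ε) * (1 - ((i:ℝ) + 1) / N))))
            ∧ (σ * ε / α) *
                  ((-Real.log (1 - 2 * (1 - ε) * (1 - (i:ℝ) / N)))
                    - (-Real.log (1 - 2 * (1 - ε) * (1 - ((i:ℝ) + 1) / N))))
                ≤ (σ * ε / α) *
                  ((-Real.log (1 - 2 * (1 - ε) * (1 - ((i:ℝ) - 1) / N)))
                    - (-Real.log (1 - 2 * (1 - ε) * (1 - (i:ℝ) / N)))) := by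
  refine ⟨1/3, by norm_num, ?_⟩
  intro N hNe hN4 ε hε hNε i hi1 hi2
  set n : ℝ := (N:ℝ) with hn
  have hn4 : (4:ℝ) ≤ n := by rw [hn]; exact_mod_cast hN4
  have hn0 : (0:ℝ) < n := by linarith
  have hε4 : ε ≤ 1/4 := by nlinarith
  -- integer bounds
  obtain ⟨m, hm⟩ := hNe
  have h2i : n + 4 ≤ 2 * (i:ℝ) := by
    have : N + 4 ≤ 2 * i := by omega
    have := (Nat.cast_le (α := ℝ)).mpr this
    push_cast at this; linarith
  have hiN : (i:ℝ) ≤ n - 1 := by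
    have : i + 1 ≤ N := by omega
    have := (Nat.cast_le (α := ℝ)).mpr this
    push_cast at this; linarith
  set x : ℝ := (i:ℝ) with hx
  set a : ℝ := 1 - 2 * (1 - ε) * (1 - (x - 1) / n) with ha
  set b : ℝ := 1 - 2 * (1 - ε) * (1 - x / n) with hb
  set c : ℝ := 1 - 2 * (1 - ε) * (1 - (x + 1) / n) with hc
  set d : ℝ := 2 * (1 - ε) / n with hd
  have hd0 : 0 < d := by
    apply div_pos; linarith; linarith
  have hba : b = a + d := by
    rw [ha, hb, hd]; field_simp; ring
  have hcb : c = b + d := by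
    rw [hb, hc, hd]; field_simp; ring
  have hna : n * a = n * (2 * ε - 1) + 2 * (1 - ε) * (x - 1) := by
    rw [ha]; field_simp; ring
  have hnd : n * d = 2 * (1 - ε) := by rw [hd]; field_simp
  clear_value n x a b c d
  have had : d + ε ≤ a := by
    have key : n * (d + ε) ≤ n * a := by
      have e : n * (d + ε) = 2 * (1 - ε) + n * ε := by rw [hd]; field_simp
      rw [e, hna]
      nlinarith [mul_nonneg (by linarith : (0:ℝ) ≤ 1 - ε)
        (by linarith : (0:ℝ) ≤ 2 * x - n - 4)]
    exact le_of_mul_le_mul_left key hn0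
  have ha0 : 0 < a := by linarith
  have hb0 : 0 < b := by rw [hba]; linarith
  have hc0 : 0 < c := by rw [hcb, hba]; linarith
  -- upper bound: log c - log b ≤ log b - log a
  have hupper : Real.log c - Real.log b ≤ Real.log b - Real.log a := by
    have h1 : c * a ≤ b * b := by nlinarith [sq_nonneg d]
    have h2 : Real.log (c * a) ≤ Real.log (b * b) :=
      Real.log_le_log (by positivity) h1
    rw [Real.log_mul (ne_of_gt hc0) (ne_of_gt ha0),
        Real.log_mul (ne_of_gt hb0) (ne_of_gt hb0)] at h2
    linarith
  -- lower bound: (1/3)(log b - log a) ≤ log c - log b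
  have hlower : (1/3) * (Real.log b - Real.log a) ≤ Real.log c - Real.log b := by
    have h1 : Real.log b - Real.log a ≤ d / a := by
      have := Real.log_le_sub_one_of_pos (show 0 < b / a by positivity)
      rw [Real.log_div (ne_of_gt hb0) (ne_of_gt ha0)] at this
      have : Real.log b - Real.log a ≤ b / a - 1 := this
      have hba' : b / a - 1 = d / a := by rw [hba]; field_simp; ring
      linarith [hba' ▸ this]
    have h2 : d / c ≤ Real.log c - Real.log b := by
      have := Real.log_le_sub_one_of_pos (show 0 < b / c by positivity)
      rw [Real.log_div (ne_of_gt hb0) (ne_of_gt hc0)] at this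
      have h3 : 1 - b / c = d / c := by rw [hcb]; field_simp; ring
      linarith
    have h4 : (1/3) * (d / a) ≤ d / c := by
      have hc3 : c ≤ 3 * a := by rw [hcb, hba]; linarith
      rw [show (1/3) * (d / a) = d / (3 * a) by ring]
      gcongr
    calc (1/3) * (Real.log b - Real.log a) ≤ (1/3) * (d / a) := by linarith
      _ ≤ d / c := h4
      _ ≤ Real.log c - Real.log b := h2
  have hk : 0 ≤ σ * ε / α := by positivity
  constructor
  · calc (1/3) * (σ * ε / α * (-Real.log a - -Real.log b))
        = (σ * ε / α) * ((1/3) * (Real.log b - Real.log a)) := by ring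
      _ ≤ (σ * ε / α) * (Real.log c - Real.log b) :=
          mul_le_mul_of_nonneg_left hlower hk
      _ = (σ * ε / α) * (-Real.log b - -Real.log c) := by ring
  · calc (σ * ε / α) * (-Real.log b - -Real.log c)
        = (σ * ε / α) * (Real.log c - Real.log b) := by ring
      _ ≤ (σ * ε / α) * (Real.log b - Real.log a) :=
          mul_le_mul_of_nonneg_left hupper hk
      _ = (σ * ε / α) * (-Real.log a - -Real.log b) := by ring
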